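/- For n ≥ 2, ∑_{l=0}^{n-1} (n-1)!/(n-1-l)! = ⌊e·(n-1)!⌋. -/

import Mathlib

/-- For `n ≥ 2`, `∑_{l=0}^{n-1} (n-1)!/(n-1-l)! = ⌊e·(n-1)!⌋`. -/
theorem stmt13 (n : ℕ) (hn : 2 ≤ n) :
    ∑ l ∈ Finset.range n, Nat.factorial (n - 1) / Nat.factorial (n - 1 - l) =
      ⌊Real.exp 1 * (Nat.factorial (n - 1) : ℝ)⌋₊ := by
  obtain ⟨m, rfl⟩ : ∃ m, n = m + 1 := ⟨n - 1, by omega⟩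
  have hm : 1 ≤ m := by omega
  simp only [Nat.add_sub_cancel]
  have hsum : ∑ l ∈ Finset.range (m+1), m.factorial / (m - l).factorial
      = ∑ k ∈ Finset.range (m+1), m.factorial / k.factorial := by
    rw [← Finset.sum_range_reflect]
    apply Finset.sum_congr rfl
    intro k hk
    simp only [Finset.mem_range] at hk
    congr 2
    omega
  rw [hsum]
  set S : ℕ := ∑ k ∈ Finset.range (m+1), m.factorial / k.factorial with hS
  have hScast : (S : ℝ) = (m.factorial : ℝ) * ∑ k ∈ Finset.range (m+1), (1:ℝ)^k / k.factorial := by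
    rw [Finset.mul_sum, hS, Nat.cast_sum]
    apply Finset.sum_congr rfl
    intro k hk
    simp only [Finset.mem_range] at hk
    rw [Nat.cast_div (Nat.factorial_dvd_factorial (by omega))
      (by exact_mod_cast (Nat.factorial_pos k).ne')]
    rw [one_pow]
    ring
  have hfac : (0:ℝ) < (m.factorial : ℝ) := by exact_mod_cast m.factorial_pos
  symm
  rw [Nat.floor_eq_iff (by positivity)]
  constructor
  · rw [hScast, mul_comm]
    apply mul_le_mul_of_nonneg_right _ hfac.le
    exact Real.sum_le_exp_of_nonneg zero_le_one (m+1)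
  · have hb := Real.exp_bound' (zero_le_one) (le_refl (1:ℝ)) (Nat.succ_pos m)
    have key : Real.exp 1 * (m.factorial : ℝ) ≤ (S : ℝ) +
        (m.factorial : ℝ) * (1 ^ (m+1) * ((m+1)+1) / ((m+1).factorial * (m+1))) := by
      rw [hScast, ← mul_add, mul_comm]
      apply mul_le_mul_of_nonneg_left _ hfac.le
      refine hb.trans_eq ?_
      congr 3 <;> simp [Nat.succ_eq_add_one]
    have hlt : (m.factorial : ℝ) * (1 ^ (m+1) * ((m+1)+1) / ((m+1).factorial * (m+1))) < 1 := by
      rw [one_pow, one_mul, mul_div_assoc']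
      have h2 : (0:ℝ) < ((m+1).factorial : ℝ) * ((m:ℝ)+1) := by positivity
      rw [div_lt_one h2]
      have hm' : (1:ℝ) ≤ (m:ℝ) := by exact_mod_cast hm
      push_cast [Nat.factorial_succ]
      have h3 : (0:ℝ) < (m:ℝ)*(m:ℝ) + (m:ℝ) - 1 := by nlinarith
      nlinarith [mul_pos hfac h3]
    calc Real.exp 1 * (m.factorial : ℝ) ≤ _ := key
      _ < (S : ℝ) + 1 := by linarith
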